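/- Let n be a positive integer, let x₁, …, xₙ > 0, let α, β > 0, let γₜ > 0, let γ be a real number with 0 < γ < 2γₜ, and let γ₀ denote the Euler–Mascheroni constant. Set S₁ = ∑_{m=0}^{∞} (1/(m+1) − 1/(m + α/γ)) and S₂ = ∑_{m=0}^{∞} 1/(m + α/γ)². Then n[ −1/γ² − (2α/γ³)(−γ₀ + S₁) − (α²/γ⁴) S₂ ] − β^γ ∑_{i=1}^{n} x_i^γ (log(β x_i))² ≥ n[ −2/γ² + 2αγ₀/γ³ − (2 + π²/6)·(α²/γ⁴) ] − ∑_{i=1}^{n} [ 4 e^{2 max(γₜ log(β x_i) − 1, 0)} 𝟙(x_i > 1/β) / (2γₜ − γ)² + 2·𝟙(x_i ≤ 1/β) / (3γ²) ], where 𝟙(·) is the indicator function. -/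

import Mathlib

open Real



lemma key_sq_exp {s : ℝ} (hs : 0 ≤ s) : s ^ 2 * Real.exp (-s) ≤ 4 * Real.exp (-2) := by
  rcases eq_or_lt_of_le hs with h | h
  · simp [← h]; positivity
  · have h2 : Real.log (s / 2) ≤ s / 2 - 1 := Real.log_le_sub_one_of_pos (by linarith)
    have h3 : (s / 2) ^ 2 ≤ Real.exp (s - 2) := by
      have e1 : Real.exp (2 * Real.log (s / 2)) = (s / 2) ^ 2 := by
        rw [two_mul, Real.exp_add, Real.exp_log (by linarith)]; ring
      rw [← e1]
      exact Real.exp_le_exp.mpr (by linarith)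
    have h4 : s ^ 2 ≤ 4 * Real.exp (s - 2) := by nlinarith
    calc s ^ 2 * Real.exp (-s) ≤ 4 * Real.exp (s - 2) * Real.exp (-s) :=
          mul_le_mul_of_nonneg_right h4 (Real.exp_nonneg _)
      _ = 4 * Real.exp (-2) := by rw [mul_assoc, ← Real.exp_add]; ring_nf

lemma four_exp_le : 4 * Real.exp (-2) ≤ 2 / 3 := by
  have h : (2.7 : ℝ) ≤ Real.exp 1 := by linarith [Real.exp_one_gt_d9]
  have h2 : (6 : ℝ) ≤ Real.exp 2 := by
    have e : Real.exp 2 = Real.exp 1 * Real.exp 1 := by rw [← Real.exp_add]; norm_num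
    nlinarith
  have h3 : Real.exp 2 * (Real.exp 2)⁻¹ = 1 := mul_inv_cancel₀ (Real.exp_pos 2).ne'
  have h4 : (0:ℝ) ≤ (Real.exp 2)⁻¹ := by positivity
  rw [Real.exp_neg]
  nlinarith


lemma per_term (γ γt t : ℝ) (hγ : 0 < γ) (hγ' : γ < 2 * γt) :
    Real.exp (γ * t) * t ^ 2 ≤
      4 * Real.exp (2 * max (γt * t - 1) 0) * (if 0 < t then (1:ℝ) else 0) / (2 * γt - γ) ^ 2
      + 2 * (if t ≤ 0 then (1:ℝ) else 0) / (3 * γ ^ 2) := by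
  by_cases ht : t ≤ 0
  · rw [if_pos ht, if_neg (not_lt.mpr ht)]
    have hu : (0:ℝ) ≤ -(γ * t) := by nlinarith
    have hk := (key_sq_exp hu).trans four_exp_le
    rw [neg_neg] at hk
    rw [mul_zero, zero_div, zero_add, mul_one, le_div_iff₀ (by positivity)]
    nlinarith [Real.exp_pos (γ * t)]
  · push_neg at ht
    rw [if_pos ht, if_neg (not_le.mpr ht), mul_zero, zero_div, add_zero, mul_one]
    have hc : (0:ℝ) < 2 * γt - γ := by linarith
    have hs : (0:ℝ) ≤ (2 * γt - γ) * t := by positivity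
    have hk := key_sq_exp hs
    have hmax : 2 * γt * t - 2 ≤ 2 * max (γt * t - 1) 0 := by
      have := le_max_left (γt * t - 1) (0:ℝ); linarith
    have e2 : Real.exp (2 * γt * t - 2) ≤ Real.exp (2 * max (γt * t - 1) 0) :=
      Real.exp_le_exp.mpr hmax
    have e1 : Real.exp (γ * t) * t ^ 2 * (2 * γt - γ) ^ 2
        = ((2 * γt - γ) * t) ^ 2 * Real.exp (-((2 * γt - γ) * t)) * Real.exp (2 * γt * t) := by
      have eexp : Real.exp (γ * t)
          = Real.exp (-((2 * γt - γ) * t)) * Real.exp (2 * γt * t) := by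
        rw [← Real.exp_add]; ring_nf
      rw [eexp]; ring
    have e3 : Real.exp (-2) * Real.exp (2 * γt * t) = Real.exp (2 * γt * t - 2) := by
      rw [← Real.exp_add]; ring_nf
    rw [le_div_iff₀ (by positivity)]
    calc Real.exp (γ * t) * t ^ 2 * (2 * γt - γ) ^ 2
        = ((2 * γt - γ) * t) ^ 2 * Real.exp (-((2 * γt - γ) * t)) * Real.exp (2 * γt * t) := e1
      _ ≤ 4 * Real.exp (-2) * Real.exp (2 * γt * t) :=
          mul_le_mul_of_nonneg_right hk (Real.exp_nonneg _)
      _ = 4 * Real.exp (2 * γt * t - 2) := by rw [mul_assoc, e3]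
      _ ≤ 4 * Real.exp (2 * max (γt * t - 1) 0) := by linarith

lemma telescope_hasSum (a : ℝ) (ha : 0 < a) :
    HasSum (fun m : ℕ => a * (1 / ((m:ℝ) + 1) - 1 / ((m:ℝ) + 2))) a := by
  have hnn : ∀ m : ℕ, 0 ≤ a * (1 / ((m:ℝ) + 1) - 1 / ((m:ℝ) + 2)) := by
    intro m
    have h1 : (0:ℝ) < (m:ℝ) + 1 := by positivity
    have h2 : (0:ℝ) < (m:ℝ) + 2 := by positivity
    have : 1 / ((m:ℝ) + 2) ≤ 1 / ((m:ℝ) + 1) := by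
      apply one_div_le_one_div_of_le h1; linarith
    nlinarith
  rw [hasSum_iff_tendsto_nat_of_nonneg hnn]
  have hps : ∀ N : ℕ, ∑ m ∈ Finset.range N, a * (1 / ((m:ℝ) + 1) - 1 / ((m:ℝ) + 2))
      = a - a / ((N:ℝ) + 1) := by
    intro N
    induction N with
    | zero => simp
    | succ k ih =>
      rw [Finset.sum_range_succ, ih]
      have h1 : ((k:ℝ) + 1) ≠ 0 := by positivity
      have h2 : ((k:ℝ) + 2) ≠ 0 := by positivity
      push_cast
      field_simp
      ring
  have key : Filter.Tendsto (fun N : ℕ => a / ((N:ℝ) + 1)) Filter.atTop (nhds 0) := by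
    have t0 := tendsto_one_div_add_atTop_nhds_zero_nat (𝕜 := ℝ)
    have t1 := t0.const_mul a
    rw [mul_zero] at t1
    exact t1.congr fun n => by ring
  have key2 := (tendsto_const_nhds (x := a) (f := Filter.atTop (α := ℕ))).sub key
  rw [sub_zero] at key2
  exact key2.congr fun N => (hps N).symm

lemma S1_bound (a : ℝ) (ha : 0 < a) :
    ∑' m : ℕ, (1 / ((m:ℝ) + 1) - 1 / ((m:ℝ) + a)) ≤ a := by
  set f := fun m : ℕ => 1 / ((m:ℝ) + 1) - 1 / ((m:ℝ) + a) with hf_def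
  by_cases hf : Summable f
  · have hg := telescope_hasSum a ha
    have hle : ∀ m : ℕ, f m ≤ a * (1 / ((m:ℝ) + 1) - 1 / ((m:ℝ) + 2)) := by
      intro m
      have h1 : (0:ℝ) < (m:ℝ) + 1 := by positivity
      have h2 : (0:ℝ) < (m:ℝ) + 2 := by positivity
      have h3 : (0:ℝ) < (m:ℝ) + a := by positivity
      have e1 : f m = (a - 1) / (((m:ℝ) + 1) * ((m:ℝ) + a)) := by
        simp only [hf_def]; field_simp; ring
      have e2 : a * (1 / ((m:ℝ) + 1) - 1 / ((m:ℝ) + 2)) = a / (((m:ℝ) + 1) * ((m:ℝ) + 2)) := by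
        field_simp; ring
      rw [e1, e2, div_le_div_iff₀ (by positivity) (by positivity)]
      nlinarith [sq_nonneg (a - 1)]
    calc ∑' m, f m ≤ ∑' m : ℕ, a * (1 / ((m:ℝ) + 1) - 1 / ((m:ℝ) + 2)) :=
          Summable.tsum_le_tsum hle hf hg.summable
      _ = a := hg.tsum_eq
  · rw [tsum_eq_zero_of_not_summable hf]; linarith

lemma S2_bound (a : ℝ) (ha : 0 < a) :
    ∑' m : ℕ, 1 / ((m:ℝ) + a) ^ 2 ≤ 1 / a ^ 2 + π ^ 2 / 6 := by
  set h := fun m : ℕ => 1 / ((m:ℝ) + a) ^ 2 with hh_def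
  by_cases hs : Summable h
  · have hbasel := hasSum_zeta_two
    have hshift : HasSum (fun n : ℕ => (1:ℝ) / ((n:ℝ) + 1) ^ 2) (π ^ 2 / 6) := by
      have h2 : HasSum (fun n : ℕ => (1:ℝ) / ((n + 1 : ℕ):ℝ) ^ 2) (π ^ 2 / 6) := by
        rw [hasSum_nat_add_iff (f := fun n : ℕ => (1:ℝ) / (n:ℝ) ^ 2) 1]
        simpa using hbasel
      convert h2 using 2 with n
      push_cast; ring
    have hshiftsum : Summable (fun m : ℕ => h (m + 1)) := (summable_nat_add_iff 1).mpr hs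
    have hle : ∀ m : ℕ, h (m + 1) ≤ 1 / ((m:ℝ) + 1) ^ 2 := by
      intro m
      simp only [hh_def]
      push_cast
      apply one_div_le_one_div_of_le (by positivity)
      nlinarith [Nat.cast_nonneg (α := ℝ) m, sq_nonneg a, mul_nonneg (Nat.cast_nonneg (α := ℝ) m) ha.le]
    have e0 : h 0 = 1 / a ^ 2 := by simp [hh_def]
    calc ∑' m, h m = h 0 + ∑' m, h (m + 1) := Summable.tsum_eq_zero_add hs
      _ ≤ 1 / a ^ 2 + π ^ 2 / 6 := by
          rw [e0]
          gcongr
          calc ∑' m, h (m + 1) ≤ ∑' m : ℕ, 1 / ((m:ℝ) + 1) ^ 2 :=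
                Summable.tsum_le_tsum hle hshiftsum hshift.summable
            _ = π ^ 2 / 6 := hshift.tsum_eq
  · rw [tsum_eq_zero_of_not_summable hs]
    positivity


/-- The SeLF lower bound for the second-order partial derivative `∂²l/∂γ²` of the
generalized Gamma log-likelihood, with current iterate `γₜ`: with
`S₁ = ∑_{m=0}^∞ (1/(m+1) − 1/(m+α/γ))`, `S₂ = ∑_{m=0}^∞ 1/(m+α/γ)²` and `γ₀`
the Euler–Mascheroni constant,
`n[−1/γ² − (2α/γ³)(−γ₀ + S₁) − (α²/γ⁴)S₂] − β^γ ∑ᵢ xᵢ^γ (log(βxᵢ))²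
 ≥ n[−2/γ² + 2αγ₀/γ³ − (2 + π²/6)(α²/γ⁴)]
   − ∑ᵢ [4 e^{2max(γₜ log(βxᵢ)−1,0)} 𝟙(xᵢ > 1/β)/(2γₜ−γ)² + 2·𝟙(xᵢ ≤ 1/β)/(3γ²)]`. -/
theorem self_lower_bound_gamma (n : ℕ) (hn : 0 < n) (x : Fin n → ℝ)
    (hx : ∀ i, 0 < x i) (α β γt γ : ℝ) (hα : 0 < α) (hβ : 0 < β)
    (hγt : 0 < γt) (hγ : 0 < γ) (hγ' : γ < 2 * γt) :
    (n : ℝ) * (-2 / γ ^ 2 + 2 * α * Real.eulerMascheroniConstant / γ ^ 3 -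
          (2 + π ^ 2 / 6) * (α ^ 2 / γ ^ 4)) -
        ∑ i, (4 * Real.exp (2 * max (γt * Real.log (β * x i) - 1) 0) *
              (if 1 / β < x i then (1 : ℝ) else 0) / (2 * γt - γ) ^ 2 +
            2 * (if x i ≤ 1 / β then (1 : ℝ) else 0) / (3 * γ ^ 2)) ≤
      (n : ℝ) * (-1 / γ ^ 2 -
            (2 * α / γ ^ 3) *
              (-Real.eulerMascheroniConstant +
                ∑' m : ℕ, (1 / ((m : ℝ) + 1) - 1 / ((m : ℝ) + α / γ))) -
            (α ^ 2 / γ ^ 4) * ∑' m : ℕ, 1 / ((m : ℝ) + α / γ) ^ 2) -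
        β ^ γ * ∑ i, (x i) ^ γ * (Real.log (β * x i)) ^ 2 := by
  have ha : 0 < α / γ := div_pos hα hγ
  set γ₀ := Real.eulerMascheroniConstant
  -- the n-part
  have hS1 := S1_bound (α / γ) ha
  have hS2 := S2_bound (α / γ) ha
  have hc1 : (0:ℝ) < 2 * α / γ ^ 3 := by positivity
  have hc2 : (0:ℝ) < α ^ 2 / γ ^ 4 := by positivity
  have hb1 : (2 * α / γ ^ 3) * (-γ₀ + ∑' m : ℕ, (1 / ((m : ℝ) + 1) - 1 / ((m : ℝ) + α / γ)))
      ≤ (2 * α / γ ^ 3) * (-γ₀ + α / γ) :=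
    mul_le_mul_of_nonneg_left (by linarith) hc1.le
  have hb2 : (α ^ 2 / γ ^ 4) * (∑' m : ℕ, 1 / ((m : ℝ) + α / γ) ^ 2)
      ≤ (α ^ 2 / γ ^ 4) * (1 / (α / γ) ^ 2 + π ^ 2 / 6) :=
    mul_le_mul_of_nonneg_left hS2 hc2.le
  have he : -1 / γ ^ 2 - (2 * α / γ ^ 3) * (-γ₀ + α / γ)
        - (α ^ 2 / γ ^ 4) * (1 / (α / γ) ^ 2 + π ^ 2 / 6)
      = -2 / γ ^ 2 + 2 * α * γ₀ / γ ^ 3 - (2 + π ^ 2 / 6) * (α ^ 2 / γ ^ 4) := by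
    field_simp
    ring
  have hA : -2 / γ ^ 2 + 2 * α * γ₀ / γ ^ 3 - (2 + π ^ 2 / 6) * (α ^ 2 / γ ^ 4)
      ≤ -1 / γ ^ 2 -
          (2 * α / γ ^ 3) * (-γ₀ + ∑' m : ℕ, (1 / ((m : ℝ) + 1) - 1 / ((m : ℝ) + α / γ))) -
          (α ^ 2 / γ ^ 4) * ∑' m : ℕ, 1 / ((m : ℝ) + α / γ) ^ 2 := by
    linarith
  have hnA := mul_le_mul_of_nonneg_left hA (Nat.cast_nonneg (α := ℝ) n)
  -- the sum part
  have hsum : β ^ γ * ∑ i, (x i) ^ γ * (Real.log (β * x i)) ^ 2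
      ≤ ∑ i, (4 * Real.exp (2 * max (γt * Real.log (β * x i) - 1) 0) *
              (if 1 / β < x i then (1 : ℝ) else 0) / (2 * γt - γ) ^ 2 +
            2 * (if x i ≤ 1 / β then (1 : ℝ) else 0) / (3 * γ ^ 2)) := by
    rw [Finset.mul_sum]
    apply Finset.sum_le_sum
    intro i _
    have hxi := hx i
    have hbx : 0 < β * x i := mul_pos hβ hxi
    have e1 : β ^ γ * ((x i) ^ γ * (Real.log (β * x i)) ^ 2)
        = Real.exp (γ * Real.log (β * x i)) * (Real.log (β * x i)) ^ 2 := by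
      rw [← mul_assoc, ← Real.mul_rpow hβ.le hxi.le, Real.rpow_def_of_pos hbx, mul_comm (Real.log (β * x i)) γ]
    have hiff1 : (1 / β < x i) ↔ (0 < Real.log (β * x i)) := by
      rw [Real.log_pos_iff hbx.le, div_lt_iff₀ hβ, mul_comm]
    have hiff2 : (x i ≤ 1 / β) ↔ (Real.log (β * x i) ≤ 0) := by
      rw [Real.log_nonpos_iff hbx.le, le_div_iff₀ hβ, mul_comm]
    rw [e1, if_congr hiff1 rfl rfl, if_congr hiff2 rfl rfl]
    exact per_term γ γt (Real.log (β * x i)) hγ hγ'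
  linarith
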